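/- Let R be a well-mixed difference ring (a commutative ring with an endomorphism σ such that ab = 0 implies a·σ(b) = 0). Then the set I = {a ∈ R : σ^i(a)^m = 0 for some m ≥ 1, i ≥ 0} is an ideal of R closed under σ, and moreover I is perfect: if a·σ(a) ∈ I then a ∈ I. -/

import Mathlib

private lemma nil_up {R : Type*} [CommRing R] (σ : R →+* R) {a : R} {i j : ℕ} (h : i ≤ j)
    (hn : IsNilpotent ((⇑σ)^[i] a)) : IsNilpotent ((⇑σ)^[j] a) := by
  obtain ⟨k, rfl⟩ := Nat.exists_eq_add_of_le h
  clear h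
  rw [add_comm, Function.iterate_add_apply]
  induction k with
  | zero => exact hn
  | succ n ih => rw [Function.iterate_succ_apply']; exact ih.map σ

/-- In a well-mixed difference ring, the set of `a` with `σ^i(a)^m = 0` for some
`m ≥ 1, i ≥ 0` is a σ-closed (difference) ideal, and it is perfect. -/
theorem stmt_0 {R : Type*} [CommRing R] (σ : R →+* R)
    (hwm : ∀ a b : R, a * b = 0 → a * σ b = 0) :
    ∃ I : Ideal R,
      (∀ a : R, a ∈ I ↔ ∃ m i : ℕ, 1 ≤ m ∧ ((⇑σ)^[i] a) ^ m = 0) ∧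
      (∀ a ∈ I, σ a ∈ I) ∧
      (∀ a : R, a * σ a ∈ I → a ∈ I) := by
  refine ⟨{ carrier := {a | ∃ i : ℕ, IsNilpotent ((⇑σ)^[i] a)}
            zero_mem' := ⟨0, by simp⟩
            add_mem' := ?_
            smul_mem' := ?_ }, ?_, ?_, ?_⟩
  · rintro a b ⟨i, hi⟩ ⟨j, hj⟩
    refine ⟨max i j, ?_⟩
    have h1 := nil_up σ (le_max_left i j) hi
    have h2 := nil_up σ (le_max_right i j) hj
    have : (⇑σ)^[max i j] (a + b) = (⇑σ)^[max i j] a + (⇑σ)^[max i j] b := by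
      induction max i j with
      | zero => rfl
      | succ n ih => simp [Function.iterate_succ_apply', ih, map_add]
    rw [this]
    exact Commute.isNilpotent_add (Commute.all _ _) h1 h2
  · rintro c a ⟨i, hi⟩
    refine ⟨i, ?_⟩
    have : (⇑σ)^[i] (c • a) = (⇑σ)^[i] c * (⇑σ)^[i] a := by
      induction i with
      | zero => rfl
      | succ n ih => simp [Function.iterate_succ_apply', ih, map_mul]
    rw [this]
    exact (Commute.all _ _).isNilpotent_mul_left hi
  · intro a
    constructor
    · rintro ⟨i, n, hn⟩
      exact ⟨n + 1, i, Nat.succ_le_succ (Nat.zero_le n), by rw [pow_succ, hn, zero_mul]⟩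
    · rintro ⟨m, i, _, h⟩
      exact ⟨i, m, h⟩
  · rintro a ⟨i, hi⟩
    refine ⟨i, ?_⟩
    rw [← Function.iterate_succ_apply, Function.iterate_succ_apply']
    exact hi.map σ
  · rintro a ⟨i, m, hm⟩
    set b := (⇑σ)^[i] a with hb
    have hmul : (⇑σ)^[i] (a * σ a) = b * σ b := by
      have : (⇑σ)^[i] (a * σ a) = (⇑σ)^[i] a * (⇑σ)^[i] (σ a) := by
        induction i with
        | zero => rfl
        | succ n ih => simp [Function.iterate_succ_apply', ih, map_mul]
      rw [this, ← Function.iterate_succ_apply, Function.iterate_succ_apply']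
    rw [hmul, mul_pow] at hm
    have h1 : (σ b) ^ m * b ^ m = 0 := by rw [mul_comm]; exact hm
    have h2 := hwm _ _ h1
    rw [map_pow] at h2
    refine ⟨i + 1, m + m, ?_⟩
    rw [Function.iterate_succ_apply', pow_add]
    exact h2
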